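/- In the algebra of pseudodifferential operators on the circle, let L = ∂^{n+1} − Σ_{j=0}^{n-1} u_j ∂^j and let the functions V^j_l (j = 0,…,n+1, l = 0,…,n) satisfy the recursion: V^{k+1}_0 = (V^k_0)_x + V^k_n (u_0 + λ), V^{k+1}_l = (V^k_l)_x + V^k_{l-1} + u_l V^k_n for l = 1,…,n (with u_n := 0 and u_l appearing as coefficients), starting from given V^0_l. Set E := −Σ_{j=0}^{n} V^0_j ∂^j. Then for each j = 0,…,n+1: ∂^j E = −Σ_{l=0}^{n} V^j_l ∂^l + (∂^j E L^{-1})_+ (L − λ), where (·)_+ denotes the purely differential part of a pseudodifferential operator. -/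

import Mathlib

/-!  A self-contained model of the algebra of pseudodifferential operators on the
circle (or over an abstract differential ring `(R, d)`).

A pseudodifferential operator `A = ∑_{i ≤ N} a_i ∂^i` is encoded by the sequence of
its coefficients `A : ℤ → R` (`A i = a_i`, vanishing for large `i`).  The product is
the standard one, determined by the generalized Leibniz rule
`∂^i ∘ b = ∑_{k ≥ 0} C(i,k) b^{(k)} ∂^{i-k}` with generalized binomial coefficients
`C(i,k) = Ring.choose i k`. -/

noncomputable section

namespace GD

variable {R : Type} [CommRing R]

/-- Pseudodifferential operators encoded by coefficient sequences:
`A : ℤ → R` stands for `∑ i, (A i) ∂^i`. -/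
abbrev PDO (R : Type) := ℤ → R

/-- The product of pseudodifferential operators, with respect to the derivation `d`
of the coefficient ring.  (The `finsum` is a finite sum whenever the two factors
have bounded order, which is the case throughout.) -/
def pmul (d : R → R) (A B : PDO R) : PDO R :=
  fun m => ∑ᶠ p : ℤ × ℕ,
    (Ring.choose p.1 p.2 : ℤ) • (A p.1 * d^[p.2] (B (m - p.1 + (p.2 : ℤ))))

/-- The single-term operator `a ∂^j`. -/
def term (a : R) (j : ℤ) : PDO R := fun m => if m = j then a else 0

/-- The identity operator `1 = ∂^0`. -/
def one : PDO R := term (1 : R) 0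

/-- The purely differential part `A₊` of a pseudodifferential operator
(the part with nonnegative powers of `∂`); `A₋ = A - A₊`. -/
def plus (A : PDO R) : PDO R := fun m => if 0 ≤ m then A m else 0

/-- `d` is a derivation of `R`. -/
def IsDeriv (d : R → R) : Prop :=
  (∀ a b, d (a + b) = d a + d b) ∧ ∀ a b, d (a * b) = d a * b + a * d b

end GD


section Infra
open GD Finset

namespace GDAux

variable {R : Type} [CommRing R]

/-- Support of the operator lies in `[0, N]`. -/
def Bdd (N : ℕ) (A : PDO R) : Prop := ∀ i : ℤ, A i ≠ 0 → 0 ≤ i ∧ i ≤ (N : ℤ)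

theorem Bdd.mono {N M : ℕ} {A : PDO R} (h : Bdd N A) (hNM : N ≤ M) : Bdd M A := by
  intro i hi
  obtain ⟨h1, h2⟩ := h i hi
  exact ⟨h1, h2.trans (by exact_mod_cast hNM)⟩

theorem Bdd.zero_of_neg {N} {A : PDO R} (h : Bdd N A) {i : ℤ} (hi : i < 0) : A i = 0 := by
  by_contra hne; exact absurd (h i hne).1 (not_le.mpr hi)

theorem Bdd.zero_of_gt {N} {A : PDO R} (h : Bdd N A) {i : ℤ} (hi : (N:ℤ) < i) : A i = 0 := by
  by_contra hne; exact absurd (h i hne).2 (not_le.mpr hi)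

theorem bdd_term {a : R} {j N : ℕ} (hj : j ≤ N) : Bdd N (term a (j:ℤ)) := by
  intro i hi
  unfold term at hi
  split at hi
  · subst ‹i = (j:ℤ)›; exact ⟨by positivity, by exact_mod_cast hj⟩
  · exact absurd rfl hi

theorem bdd_zero {N : ℕ} : Bdd N (0 : PDO R) := fun i hi => absurd rfl hi

theorem bdd_neg {N} {A : PDO R} (h : Bdd N A) : Bdd N (-A) := by
  intro i hi
  exact h i (by simpa using hi)

theorem bdd_add {N} {A B : PDO R} (hA : Bdd N A) (hB : Bdd N B) : Bdd N (A + B) := by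
  intro i hi
  by_cases h1 : A i ≠ 0
  · exact hA i h1
  · refine hB i ?_
    intro h2
    apply hi
    push_neg at h1
    show A i + B i = 0
    rw [h1, h2, add_zero]

theorem bdd_sub {N} {A B : PDO R} (hA : Bdd N A) (hB : Bdd N B) : Bdd N (A - B) := by
  rw [sub_eq_add_neg]; exact bdd_add hA (bdd_neg hB)

theorem bdd_sum {N} {ι : Type*} {s : Finset ι} {F : ι → PDO R}
    (h : ∀ t ∈ s, Bdd N (F t)) : Bdd N (∑ t ∈ s, F t) := by
  classical
  induction s using Finset.induction with
  | empty => simpa using bdd_zero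
  | insert _ _ hx ih =>
    rw [Finset.sum_insert hx]
    exact bdd_add (h _ (Finset.mem_insert_self _ _))
      (ih fun t ht => h t (Finset.mem_insert_of_mem ht))

section Deriv

variable {d : R → R} (hd : IsDeriv d)

/-- `d` as an additive monoid hom. -/
noncomputable def dhom (hd : IsDeriv d) : R →+ R := AddMonoidHom.mk' d hd.1

theorem dhom_apply (x : R) : dhom hd x = d x := rfl

include hd

theorem d_zero : d (0 : R) = 0 := (dhom hd).map_zero

theorem d_one : d (1 : R) = 0 := by
  have := hd.2 1 1
  simp only [mul_one, one_mul] at this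
  have h2 : d (1:R) = d 1 + d 1 := this
  nth_rewrite 1 [← add_zero (d (1:R))] at h2
  exact (add_left_cancel h2).symm

theorem iter_zero (k : ℕ) : d^[k] (0 : R) = 0 := by
  induction k with
  | zero => rfl
  | succ k ih => rw [Function.iterate_succ_apply, d_zero hd, ih]

theorem iter_add (k : ℕ) (x y : R) : d^[k] (x + y) = d^[k] x + d^[k] y := by
  induction k generalizing x y with
  | zero => rfl
  | succ k ih =>
    rw [Function.iterate_succ_apply, hd.1, ih, Function.iterate_succ_apply,
      Function.iterate_succ_apply]

theorem iter_neg (k : ℕ) (x : R) : d^[k] (-x) = - d^[k] x := by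
  have h := iter_add hd k x (-x)
  rw [add_neg_cancel, iter_zero hd] at h
  exact (eq_neg_of_add_eq_zero_right h.symm)

theorem iter_sub (k : ℕ) (x y : R) : d^[k] (x - y) = d^[k] x - d^[k] y := by
  rw [sub_eq_add_neg, iter_add hd, iter_neg hd, sub_eq_add_neg]

theorem iter_const_mul {c : R} (hc : d c = 0) (k : ℕ) (x : R) :
    d^[k] (c * x) = c * d^[k] x := by
  induction k generalizing x with
  | zero => rfl
  | succ k ih =>
    rw [Function.iterate_succ_apply, hd.2, hc, zero_mul, zero_add, ih,
      Function.iterate_succ_apply]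

theorem iter_const {c : R} (hc : d c = 0) (k : ℕ) (hk : k ≠ 0) : d^[k] c = 0 := by
  obtain ⟨k, rfl⟩ := Nat.exists_eq_succ_of_ne_zero hk
  rw [Function.iterate_succ_apply, hc, iter_zero hd]

theorem d_sum {ι : Type*} (s : Finset ι) (f : ι → R) :
    d (∑ t ∈ s, f t) = ∑ t ∈ s, d (f t) := by
  simpa only [dhom_apply] using map_sum (dhom hd) f s

end Deriv

/-- The key computation: `pmul` as an honest finite double sum when the left
factor has support in `[0, N]`. -/
theorem pmul_eq (d : R → R) {N : ℕ} {A : PDO R} (hA : Bdd N A) (B : PDO R) (m : ℤ) :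
    pmul d A B m = ∑ i ∈ range (N+1), ∑ k ∈ range (N+1),
      (i.choose k : R) * (A (i:ℤ) * d^[k] (B (m - (i:ℤ) + (k:ℤ)))) := by
  classical
  unfold pmul
  set emb : ℕ × ℕ ↪ ℤ × ℕ :=
    ⟨fun q => ((q.1 : ℤ), q.2), by
      intro a b h
      simp only [Prod.ext_iff] at h ⊢
      exact ⟨by exact_mod_cast h.1, h.2⟩⟩ with hemb
  set f : ℤ × ℕ → R := fun p =>
    (Ring.choose p.1 p.2 : ℤ) • (A p.1 * d^[p.2] (B (m - p.1 + (p.2 : ℤ)))) with hf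
  have hsup : Function.support f ⊆ ((range (N+1)) ×ˢ (range (N+1))).map emb := by
    intro p hp
    simp only [Function.mem_support, hf] at hp
    have hA1 : A p.1 ≠ 0 := by
      intro h
      exact hp (by rw [h, zero_mul, smul_zero])
    obtain ⟨h0, hN⟩ := hA p.1 hA1
    obtain ⟨p1, p2⟩ := p
    simp only at hp hA1 h0 hN ⊢
    obtain ⟨i, rfl⟩ : ∃ i : ℕ, p1 = (i : ℤ) := ⟨p1.toNat, (Int.toNat_of_nonneg h0).symm⟩
    have hk : p2 ≤ i := by
      by_contra hk
      push_neg at hk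
      rw [Ring.choose_natCast, Nat.choose_eq_zero_of_lt hk] at hp
      exact hp (by simp)
    have hiN : i ≤ N := by exact_mod_cast hN
    simp only [Finset.coe_map, Set.mem_image, Finset.mem_coe, Finset.mem_product,
      Finset.mem_range, hemb]
    exact ⟨(i, p2), ⟨by omega, by omega⟩, rfl⟩
  rw [finsum_eq_sum_of_support_subset f hsup, Finset.sum_map, Finset.sum_product]
  refine Finset.sum_congr rfl fun i _ => Finset.sum_congr rfl fun k _ => ?_
  show (Ring.choose ((i:ℤ)) k : ℤ) • (A (i:ℤ) * d^[k] (B (m - (i:ℤ) + (k : ℤ)))) = _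
  rw [Ring.choose_natCast, zsmul_eq_mul, Int.cast_natCast]


section PmulLemmas

variable {d : R → R} (hd : IsDeriv d)

theorem bdd_pmul {N M : ℕ} {A B : PDO R} (hd : IsDeriv d) (hA : Bdd N A) (hB : Bdd M B) :
    Bdd (N + M) (pmul d A B) := by
  intro mm hm
  rw [pmul_eq d hA B mm] at hm
  obtain ⟨i, hi, hne⟩ := Finset.exists_ne_zero_of_sum_ne_zero hm
  obtain ⟨k, hk, hne⟩ := Finset.exists_ne_zero_of_sum_ne_zero hne
  have hki : k ≤ i := by
    by_contra h
    push_neg at h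
    rw [Nat.choose_eq_zero_of_lt h] at hne
    simp at hne
  have hAi : A i ≠ 0 := fun h => hne (by rw [h, zero_mul, mul_zero])
  have hBi : B (mm - i + k) ≠ 0 := by
    intro h
    exact hne (by rw [h, iter_zero hd, mul_zero, mul_zero])
  obtain ⟨h1, h2⟩ := hA _ hAi
  obtain ⟨h3, h4⟩ := hB _ hBi
  constructor <;> [push_cast at *; push_cast at *] <;> omega

theorem pmul_zero_left (B : PDO R) : pmul d (0 : PDO R) B = 0 := by
  funext m
  show ∑ᶠ p : ℤ × ℕ, (Ring.choose p.1 p.2 : ℤ) •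
      ((0 : PDO R) p.1 * d^[p.2] (B (m - p.1 + (p.2 : ℤ)))) = 0
  have h : ∀ p : ℤ × ℕ, (Ring.choose p.1 p.2 : ℤ) •
      ((0 : PDO R) p.1 * d^[p.2] (B (m - p.1 + (p.2 : ℤ)))) = 0 := by
    intro p
    rw [Pi.zero_apply, zero_mul, smul_zero]
  rw [funext h]
  exact finsum_zero

theorem pmul_add_left {N : ℕ} {A A' : PDO R} (hA : Bdd N A) (hA' : Bdd N A') (B : PDO R) :
    pmul d (A + A') B = pmul d A B + pmul d A' B := by
  funext m
  rw [Pi.add_apply, pmul_eq d (bdd_add hA hA') B m, pmul_eq d hA B m, pmul_eq d hA' B m,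
    ← Finset.sum_add_distrib]
  refine Finset.sum_congr rfl fun i _ => ?_
  rw [← Finset.sum_add_distrib]
  refine Finset.sum_congr rfl fun k _ => ?_
  rw [Pi.add_apply]
  ring

theorem pmul_neg_left {N : ℕ} {A : PDO R} (hA : Bdd N A) (B : PDO R) :
    pmul d (-A) B = - pmul d A B := by
  funext m
  rw [Pi.neg_apply, pmul_eq d (bdd_neg hA) B m, pmul_eq d hA B m, ← Finset.sum_neg_distrib]
  refine Finset.sum_congr rfl fun i _ => ?_
  rw [← Finset.sum_neg_distrib]
  refine Finset.sum_congr rfl fun k _ => ?_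
  rw [Pi.neg_apply]
  ring

theorem pmul_sub_left {N : ℕ} {A A' : PDO R} (hA : Bdd N A) (hA' : Bdd N A') (B : PDO R) :
    pmul d (A - A') B = pmul d A B - pmul d A' B := by
  rw [sub_eq_add_neg, pmul_add_left hA (bdd_neg hA'), pmul_neg_left hA', sub_eq_add_neg]

theorem pmul_sum_left {N : ℕ} {ι : Type*} {s : Finset ι} {F : ι → PDO R}
    (h : ∀ t ∈ s, Bdd N (F t)) (B : PDO R) :
    pmul d (∑ t ∈ s, F t) B = ∑ t ∈ s, pmul d (F t) B := by
  classical
  induction s using Finset.induction with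
  | empty => simpa using pmul_zero_left B
  | insert _ _ hx ih =>
    rw [Finset.sum_insert hx, Finset.sum_insert hx,
      pmul_add_left (h _ (Finset.mem_insert_self _ _))
        (bdd_sum fun t ht => h t (Finset.mem_insert_of_mem ht)),
      ih fun t ht => h t (Finset.mem_insert_of_mem ht)]

theorem pmul_smul_left {N : ℕ} {A : PDO R} (hA : Bdd N A) (a : R) (B : PDO R) :
    pmul d (fun i => a * A i) B = fun m => a * pmul d A B m := by
  have hA2 : Bdd N (fun i => a * A i) := fun i hi => hA i fun h => hi (by show a * A i = 0; rw [h, mul_zero])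
  funext m
  rw [pmul_eq d hA2 B m, pmul_eq d hA B m, Finset.mul_sum]
  refine Finset.sum_congr rfl fun i _ => ?_
  rw [Finset.mul_sum]
  refine Finset.sum_congr rfl fun k _ => ?_
  ring

include hd

theorem pmul_add_right {N : ℕ} {A : PDO R} (hA : Bdd N A) (B B' : PDO R) :
    pmul d A (B + B') = pmul d A B + pmul d A B' := by
  funext m
  rw [Pi.add_apply, pmul_eq d hA, pmul_eq d hA, pmul_eq d hA, ← Finset.sum_add_distrib]
  refine Finset.sum_congr rfl fun i _ => ?_
  rw [← Finset.sum_add_distrib]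
  refine Finset.sum_congr rfl fun k _ => ?_
  rw [Pi.add_apply, iter_add hd]
  ring

theorem pmul_sub_right {N : ℕ} {A : PDO R} (hA : Bdd N A) (B B' : PDO R) :
    pmul d A (B - B') = pmul d A B - pmul d A B' := by
  funext m
  rw [Pi.sub_apply, pmul_eq d hA, pmul_eq d hA, pmul_eq d hA, ← Finset.sum_sub_distrib]
  refine Finset.sum_congr rfl fun i _ => ?_
  rw [← Finset.sum_sub_distrib]
  refine Finset.sum_congr rfl fun k _ => ?_
  rw [Pi.sub_apply, iter_sub hd]
  ring

theorem pmul_smul_right {N : ℕ} {A : PDO R} (hA : Bdd N A) {c : R} (hc : d c = 0) (B : PDO R) :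
    pmul d A (fun i => c * B i) = fun m => c * pmul d A B m := by
  funext m
  rw [pmul_eq d hA, pmul_eq d hA, Finset.mul_sum]
  refine Finset.sum_congr rfl fun i _ => ?_
  rw [Finset.mul_sum]
  refine Finset.sum_congr rfl fun k _ => ?_
  show (i.choose k : R) * (A i * d^[k] (c * B (m - i + k))) = _
  rw [iter_const_mul hd hc]
  ring

theorem pmul_termc_left (a : R) (B : PDO R) :
    pmul d (term a 0) B = fun m => a * B m := by
  funext m
  have h0 : Bdd 0 (term a (0:ℤ)) := by
    have := bdd_term (a := a) (j := 0) (N := 0) (le_refl 0)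
    simpa using this
  rw [pmul_eq d h0 B m]
  simp [term]

theorem pmul_termc_right {N : ℕ} {A : PDO R} (hA : Bdd N A) {c : R} (hc : d c = 0) :
    pmul d A (term c 0) = fun m => A m * c := by
  funext m
  rw [pmul_eq d hA]
  have h1 : ∀ i ∈ range (N+1), ∑ k ∈ range (N+1),
      (i.choose k : R) * (A i * d^[k] (term c 0 (m - i + k))) =
      (if m = (i:ℤ) then A (i:ℤ) * c else 0) := by
    intro i _
    rw [Finset.sum_eq_single_of_mem 0 (Finset.mem_range.mpr (Nat.succ_pos N))]
    · simp only [Nat.choose_zero_right, Nat.cast_one, one_mul, Function.iterate_zero, id_eq,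
        Nat.cast_zero, add_zero]
      show A i * (if m - i = 0 then c else 0) = _
      split_ifs with h h2 h2
      · rfl
      · exact absurd (by omega) h2
      · exact absurd (by omega) h
      · rw [mul_zero]
    · intro k _ hk
      show (i.choose k : R) * (A i * d^[k] (if m - i + k = 0 then c else 0)) = 0
      split_ifs with h
      · rw [iter_const hd hc k hk, mul_zero, mul_zero]
      · rw [iter_zero hd, mul_zero, mul_zero]
  rw [Finset.sum_congr rfl h1]
  by_cases hm : 0 ≤ m ∧ m ≤ (N:ℤ)
  · obtain ⟨l, rfl⟩ : ∃ l : ℕ, m = (l:ℤ) := ⟨m.toNat, (Int.toNat_of_nonneg hm.1).symm⟩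
    rw [Finset.sum_eq_single_of_mem l (Finset.mem_range.mpr (by omega))]
    · simp
    · intro b _ hb
      rw [if_neg (by exact_mod_cast fun h => hb (by exact_mod_cast h.symm))]
  · have hAm : A m = 0 := by
      rcases not_and_or.mp hm with h | h
      · exact hA.zero_of_neg (by omega)
      · exact hA.zero_of_gt (by omega)
    have hz : ∑ i ∈ range (N+1), (if m = (i:ℤ) then A (i:ℤ) * c else 0) = 0 :=
      Finset.sum_eq_zero fun i hi => by
        rw [Finset.mem_range] at hi
        rw [if_neg]
        rcases not_and_or.mp hm with h | h <;> push_neg at h <;> omega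
    rw [hz, hAm, zero_mul]

theorem pmul_one_right {N : ℕ} {A : PDO R} (hA : Bdd N A) : pmul d A GD.one = A := by
  have h : pmul d A GD.one = fun m => A m * 1 := pmul_termc_right hd hA (d_one hd)
  funext m
  rw [h]
  exact mul_one (A m)

theorem pmul_one_left (B : PDO R) : pmul d GD.one B = B := by
  have h : pmul d GD.one B = fun m => 1 * B m := pmul_termc_left hd (1:R) B
  funext m
  rw [h]
  exact one_mul (B m)

theorem pmul_upper_vanish {N : ℕ} {A B : PDO R} (hA : Bdd N A) {t b : ℤ}
    (hAt : ∀ i, t < i → A i = 0) (hB : ∀ i, b < i → B i = 0)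
    {m : ℤ} (hm : t + b < m) : pmul d A B m = 0 := by
  rw [pmul_eq d hA]
  refine Finset.sum_eq_zero fun i _ => Finset.sum_eq_zero fun k _ => ?_
  by_cases hi : t < (i:ℤ)
  · rw [hAt _ hi, zero_mul, mul_zero]
  · rw [hB (m - i + k) (by omega), iter_zero hd, mul_zero, mul_zero]

theorem pmul_top {N : ℕ} {A B : PDO R} (hA : Bdd N A) {c : ℤ}
    (hB : ∀ i, -c < i → B i = 0) :
    pmul d A B ((N:ℤ) - c) = A N * B (-c) := by
  rw [pmul_eq d hA]
  rw [Finset.sum_eq_single_of_mem N (Finset.mem_range.mpr (Nat.lt_succ_self N))]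
  · rw [Finset.sum_eq_single_of_mem 0 (Finset.mem_range.mpr (Nat.succ_pos N))]
    · have harg : (N:ℤ) - c - N + ((0:ℕ):ℤ) = -c := by push_cast; ring
      rw [harg]
      simp
    · intro k _ hk
      rw [hB ((N:ℤ) - c - N + k) (by omega), iter_zero hd, mul_zero, mul_zero]
  · intro i hi hiN
    rw [Finset.mem_range] at hi
    refine Finset.sum_eq_zero fun k _ => ?_
    by_cases hki : k ≤ i
    · rw [hB ((N:ℤ) - c - i + k) (by omega), iter_zero hd, mul_zero, mul_zero]
    · rw [Nat.choose_eq_zero_of_lt (by omega), Nat.cast_zero, zero_mul]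

end PmulLemmas


section DopLemmas

variable {d : R → R} (hd : IsDeriv d)

/-- Left composition with `∂`. -/
def Dop (d : R → R) (A : PDO R) : PDO R := fun m => d (A m) + A (m - 1)

include hd

theorem pmul_d_left (B : PDO R) : pmul d (term (1:R) 1) B = Dop d B := by
  funext m
  have h1 : Bdd 1 (term (1:R) ((1:ℕ):ℤ)) := bdd_term (le_refl 1)
  have h1' : Bdd 1 (term (1:R) (1:ℤ)) := by exact_mod_cast h1
  rw [pmul_eq d h1' B m]
  have e0 : term (1:R) 1 ((0:ℕ):ℤ) = 0 := by norm_num [term]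
  have e1 : term (1:R) 1 ((1:ℕ):ℤ) = 1 := by norm_num [term]
  rw [show (1:ℕ)+1 = 2 from rfl, Finset.sum_range_succ, Finset.sum_range_one,
    Finset.sum_range_succ, Finset.sum_range_one, Finset.sum_range_succ, Finset.sum_range_one,
    e0, e1]
  have e2 : m - ((1:ℕ):ℤ) + ((0:ℕ):ℤ) = m - 1 := by push_cast; ring
  have e3 : m - ((1:ℕ):ℤ) + ((1:ℕ):ℤ) = m := by push_cast; ring
  rw [e2, e3]
  show (((0:ℕ).choose 0 : ℕ) : R) * (0 * d^[0] (B (m - (0:ℕ) + (0:ℕ)))) +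
      (((0:ℕ).choose 1 : ℕ) : R) * (0 * d^[1] (B (m - (0:ℕ) + (1:ℕ)))) +
      ((((1:ℕ).choose 0 : ℕ) : R) * (1 * d^[0] (B (m - 1))) +
        (((1:ℕ).choose 1 : ℕ) : R) * (1 * d^[1] (B m))) = Dop d B m
  show _ = d (B m) + B (m - 1)
  simp only [mul_zero, zero_mul, zero_add, one_mul, Function.iterate_zero, id_eq,
    Function.iterate_one, Nat.choose_self, Nat.choose_zero_right, Nat.cast_one]
  ring

theorem bdd_Dop {N : ℕ} {A : PDO R} (hA : Bdd N A) : Bdd (N + 1) (Dop d A) := by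
  intro i hi
  unfold Dop at hi
  by_cases h1 : A i = 0
  · have h2 : A (i - 1) ≠ 0 := by
      intro h
      exact hi (by rw [h1, d_zero hd, h, add_zero])
    obtain ⟨a, b⟩ := hA _ h2
    push_cast
    omega
  · obtain ⟨a, b⟩ := hA _ h1
    push_cast
    omega

theorem Dop_term (j : ℤ) : Dop d (term (1:R) j) = term (1:R) (j + 1) := by
  funext i
  show d (term (1:R) j i) + term (1:R) j (i-1) = term 1 (j+1) i
  unfold term
  split_ifs <;> first
    | (exfalso; omega)
    | simp [d_one hd, d_zero hd]

omit hd in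
theorem Dop_add (A B : PDO R) (hd : IsDeriv d) : Dop d (A + B) = Dop d A + Dop d B := by
  funext m
  show d (A m + B m) + (A (m-1) + B (m-1)) = (d (A m) + A (m-1)) + (d (B m) + B (m-1))
  rw [hd.1]
  ring

/-- The crucial Leibniz-compatibility: `∂ ∘ (A ∘ B) = (∂ ∘ A) ∘ B`. -/
theorem d_natCast (n : ℕ) : d ((n : R)) = 0 := by
  induction n with
  | zero => exact_mod_cast d_zero hd
  | succ n ih =>
    push_cast
    rw [hd.1, ih, d_one hd, add_zero]

theorem leib {N : ℕ} {A : PDO R} (hA : Bdd N A) (B : PDO R) :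
    pmul d (Dop d A) B = Dop d (pmul d A B) := by
  funext m
  have hA' : Bdd (N + 1) A := hA.mono (Nat.le_succ N)
  have hD : Bdd (N + 1) (Dop d A) := bdd_Dop hd hA
  rw [pmul_eq d hD B m]
  show _ = d (pmul d A B m) + pmul d A B (m - 1)
  rw [pmul_eq d hA' B m, pmul_eq d hA' B (m - 1), d_sum hd]
  set M := N + 1 with hM
  have hAM : A ((M:ℕ):ℤ) = 0 := hA.zero_of_gt (by push_cast; omega)
  have hR : ∑ i ∈ range (M+1), d (∑ k ∈ range (M+1),
        (i.choose k : R) * (A (i:ℤ) * d^[k] (B (m - i + k))))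
      = (∑ i ∈ range (M+1), ∑ k ∈ range (M+1),
          (i.choose k : R) * (d (A (i:ℤ)) * d^[k] (B (m - i + k))))
        + ∑ i ∈ range (M+1), ∑ k ∈ range (M+1),
          (i.choose k : R) * (A (i:ℤ) * d^[k+1] (B (m - i + k))) := by
    rw [← Finset.sum_add_distrib]
    refine Finset.sum_congr rfl fun i _ => ?_
    rw [d_sum hd, ← Finset.sum_add_distrib]
    refine Finset.sum_congr rfl fun k _ => ?_
    rw [hd.2, d_natCast hd, zero_mul, zero_add, hd.2, Function.iterate_succ_apply']
    ring
  have hKey : ∑ i ∈ range (M+1), ∑ k ∈ range (M+1),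
        (i.choose k : R) * (A ((i:ℤ) - 1) * d^[k] (B (m - i + k)))
      = (∑ i ∈ range (M+1), ∑ k ∈ range (M+1),
          (i.choose k : R) * (A (i:ℤ) * d^[k+1] (B (m - i + k))))
        + ∑ i ∈ range (M+1), ∑ k ∈ range (M+1),
          (i.choose k : R) * (A (i:ℤ) * d^[k] (B (m - 1 - i + k))) := by
    rw [Finset.sum_range_succ']
    have f0 : ∑ k ∈ range (M+1),
        (((0:ℕ).choose k : ℕ) : R) * (A (((0:ℕ):ℤ) - 1) * d^[k] (B (m - ((0:ℕ):ℤ) + k))) = 0 :=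
      Finset.sum_eq_zero fun k _ => by
        rw [hA.zero_of_neg (by norm_num), zero_mul, mul_zero]
    rw [f0, add_zero]
    have hsh : ∀ i ∈ range M, ∑ k ∈ range (M+1),
        ((((i+1:ℕ)).choose k : ℕ) : R) * (A (((i+1:ℕ):ℤ) - 1) * d^[k] (B (m - ((i+1:ℕ):ℤ) + k)))
        = ∑ k ∈ range (M+1),
          (((i+1).choose k : ℕ) : R) * (A (i:ℤ) * d^[k] (B (m - 1 - (i:ℤ) + k))) := by
      intro i _
      refine Finset.sum_congr rfl fun k _ => ?_
      have e1 : ((i+1:ℕ):ℤ) - 1 = (i:ℤ) := by push_cast; ring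
      have e2 : m - ((i+1:ℕ):ℤ) + (k:ℤ) = m - 1 - (i:ℤ) + k := by push_cast; ring
      rw [e1, e2]
    rw [Finset.sum_congr rfl hsh]
    have hFM : ∑ k ∈ range (M+1),
        (((M+1).choose k : ℕ) : R) * (A ((M:ℕ):ℤ) * d^[k] (B (m - 1 - ((M:ℕ):ℤ) + k))) = 0 :=
      Finset.sum_eq_zero fun k _ => by rw [hAM, zero_mul, mul_zero]
    have hext : ∑ i ∈ range M, ∑ k ∈ range (M+1),
          (((i+1).choose k : ℕ) : R) * (A (i:ℤ) * d^[k] (B (m - 1 - (i:ℤ) + k)))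
        = ∑ i ∈ range (M+1), ∑ k ∈ range (M+1),
          (((i+1).choose k : ℕ) : R) * (A (i:ℤ) * d^[k] (B (m - 1 - (i:ℤ) + k))) := by
      rw [Finset.sum_range_succ (fun i => ∑ k ∈ range (M+1),
        (((i+1).choose k : ℕ) : R) * (A (i:ℤ) * d^[k] (B (m - 1 - (i:ℤ) + k)))) M, hFM, add_zero]
    rw [hext, ← Finset.sum_add_distrib]
    refine Finset.sum_congr rfl fun i hi => ?_
    rw [Finset.mem_range] at hi
    have htop : (i.choose M : R) * (A (i:ℤ) * d^[M+1] (B (m - (i:ℤ) + (M:ℕ)))) = 0 := by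
      rcases Nat.lt_or_ge i M with h | h
      · rw [Nat.choose_eq_zero_of_lt h, Nat.cast_zero, zero_mul]
      · have hiM : i = M := by omega
        subst hiM
        rw [hAM, zero_mul, mul_zero]
    rw [Finset.sum_range_succ'
        (fun k => (((i+1).choose k : ℕ) : R) * (A (i:ℤ) * d^[k] (B (m - 1 - (i:ℤ) + k)))) M,
      Finset.sum_range_succ
        (fun k => ((i.choose k : ℕ) : R) * (A (i:ℤ) * d^[k+1] (B (m - (i:ℤ) + k)))) M,
      Finset.sum_range_succ'
        (fun k => ((i.choose k : ℕ) : R) * (A (i:ℤ) * d^[k] (B (m - 1 - (i:ℤ) + k)))) M]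
    simp only [htop, add_zero]
    have hinner : ∀ k ∈ range M,
        (((i+1).choose (k+1) : ℕ) : R) * (A (i:ℤ) * d^[k+1] (B (m - 1 - (i:ℤ) + ((k+1:ℕ):ℤ))))
        = ((i.choose k : ℕ) : R) * (A (i:ℤ) * d^[k+1] (B (m - (i:ℤ) + k)))
          + ((i.choose (k+1) : ℕ) : R) * (A (i:ℤ) * d^[k+1] (B (m - 1 - (i:ℤ) + ((k+1:ℕ):ℤ)))) := by
      intro k _
      have e3 : m - 1 - (i:ℤ) + ((k+1:ℕ):ℤ) = m - (i:ℤ) + k := by push_cast; ring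
      rw [e3, Nat.choose_succ_succ]
      push_cast
      ring
    rw [Finset.sum_congr rfl hinner, Finset.sum_add_distrib]
    simp only [Nat.choose_zero_right, Nat.cast_one, one_mul]
    ring
  calc ∑ i ∈ range (M+1), ∑ k ∈ range (M+1),
        (i.choose k : R) * (Dop d A (i:ℤ) * d^[k] (B (m - i + k)))
      = (∑ i ∈ range (M+1), ∑ k ∈ range (M+1),
          (i.choose k : R) * (d (A (i:ℤ)) * d^[k] (B (m - i + k))))
        + ∑ i ∈ range (M+1), ∑ k ∈ range (M+1),
          (i.choose k : R) * (A ((i:ℤ) - 1) * d^[k] (B (m - i + k))) := by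
        rw [← Finset.sum_add_distrib]
        refine Finset.sum_congr rfl fun i _ => ?_
        rw [← Finset.sum_add_distrib]
        refine Finset.sum_congr rfl fun k _ => ?_
        show _ * ((d (A (i:ℤ)) + A ((i:ℤ) - 1)) * _) = _
        ring
    _ = _ := by
        rw [hKey, hR]
        ring

end DopLemmas


section Assoc

variable {d : R → R} (hd : IsDeriv d)

theorem bdd_term_int {a : R} {j : ℤ} {N : ℕ} (h0 : 0 ≤ j) (hj : j ≤ (N:ℤ)) :
    Bdd N (term a j) := by
  intro i hi
  unfold term at hi
  split at hi
  · subst ‹i = j›; exact ⟨h0, hj⟩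
  · exact absurd rfl hi

theorem term_smul (a : R) (j : ℤ) : term a j = fun i => a * term (1:R) j i := by
  funext i
  unfold term
  split_ifs <;> simp

include hd

theorem d_neg (x : R) : d (-x) = - d x := (dhom hd).map_neg x

theorem assoc_term1 (j : ℕ) {M : ℕ} {B : PDO R} (hB : Bdd M B) (C : PDO R) :
    pmul d (pmul d (term (1:R) (j:ℤ)) B) C = pmul d (term (1:R) (j:ℤ)) (pmul d B C) := by
  induction j with
  | zero =>
    have e0 : term (1:R) ((0:ℕ):ℤ) = GD.one := by norm_num [GD.one]
    rw [e0, pmul_one_left hd B, pmul_one_left hd (pmul d B C)]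
  | succ j ih =>
    have hstep : term (1:R) ((j+1:ℕ):ℤ) = Dop d (term (1:R) (j:ℤ)) := by
      rw [Dop_term hd, show ((j+1:ℕ):ℤ) = (j:ℤ)+1 by push_cast; ring]
    have hBj : Bdd (j + M) (pmul d (term (1:R) (j:ℤ)) B) :=
      bdd_pmul hd (bdd_term (le_refl j)) hB
    rw [hstep, leib hd (bdd_term (le_refl j)) B, leib hd hBj C, ih,
      ← leib hd (bdd_term (le_refl j)) (pmul d B C)]

omit hd in
theorem decomp {N : ℕ} {A : PDO R} (hA : Bdd N A) :
    A = ∑ i ∈ range (N+1), term (A (i:ℤ)) (i:ℤ) := by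
  funext m
  rw [Finset.sum_apply]
  by_cases hm : 0 ≤ m ∧ m ≤ (N:ℤ)
  · obtain ⟨l, rfl⟩ : ∃ l : ℕ, m = (l:ℤ) := ⟨m.toNat, (Int.toNat_of_nonneg hm.1).symm⟩
    rw [Finset.sum_eq_single_of_mem l (Finset.mem_range.mpr (by omega))]
    · simp [term]
    · intro b _ hb
      unfold term
      rw [if_neg (by exact_mod_cast fun h => hb (by exact_mod_cast h.symm))]
  · have hz : A m = 0 := by
      rcases not_and_or.mp hm with h | h
      · exact hA.zero_of_neg (by omega)
      · exact hA.zero_of_gt (by omega)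
    rw [hz, Finset.sum_eq_zero]
    intro i hi
    rw [Finset.mem_range] at hi
    unfold term
    rw [if_neg]
    rcases not_and_or.mp hm with h | h <;> push_neg at h <;> omega

theorem assoc {N M : ℕ} {A B : PDO R} (hA : Bdd N A) (hB : Bdd M B) (C : PDO R) :
    pmul d (pmul d A B) C = pmul d A (pmul d B C) := by
  have hterm : ∀ (a : R) (j : ℕ),
      pmul d (pmul d (term a (j:ℤ)) B) C = pmul d (term a (j:ℤ)) (pmul d B C) := by
    intro a j
    have h1 : term a ((j:ℕ):ℤ) = fun i => a * term (1:R) (j:ℤ) i := term_smul a _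
    calc pmul d (pmul d (term a (j:ℤ)) B) C
        = pmul d (fun m => a * pmul d (term (1:R) (j:ℤ)) B m) C := by
          rw [h1, pmul_smul_left (bdd_term (le_refl j)) a B]
      _ = fun m => a * pmul d (pmul d (term (1:R) (j:ℤ)) B) C m :=
          pmul_smul_left (bdd_pmul hd (bdd_term (le_refl j)) hB) a C
      _ = fun m => a * pmul d (term (1:R) (j:ℤ)) (pmul d B C) m := by
          rw [assoc_term1 hd j hB C]
      _ = pmul d (fun i => a * term (1:R) (j:ℤ) i) (pmul d B C) :=
          (pmul_smul_left (bdd_term (le_refl j)) a (pmul d B C)).symm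
      _ = pmul d (term a (j:ℤ)) (pmul d B C) := by rw [← h1]
  calc pmul d (pmul d A B) C
      = pmul d (pmul d (∑ i ∈ range (N+1), term (A (i:ℤ)) (i:ℤ)) B) C := by
        rw [← decomp hA]
    _ = pmul d (∑ i ∈ range (N+1), pmul d (term (A (i:ℤ)) (i:ℤ)) B) C := by
        rw [pmul_sum_left (fun t ht => bdd_term (Nat.lt_succ_iff.mp (Finset.mem_range.mp ht))) B]
    _ = ∑ i ∈ range (N+1), pmul d (pmul d (term (A (i:ℤ)) (i:ℤ)) B) C :=
        pmul_sum_left (fun t ht =>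
          bdd_pmul hd (bdd_term (Nat.lt_succ_iff.mp (Finset.mem_range.mp ht))) hB) C
    _ = ∑ i ∈ range (N+1), pmul d (term (A (i:ℤ)) (i:ℤ)) (pmul d B C) :=
        Finset.sum_congr rfl fun i _ => hterm (A i) i
    _ = pmul d (∑ i ∈ range (N+1), term (A (i:ℤ)) (i:ℤ)) (pmul d B C) :=
        (pmul_sum_left (fun t ht => bdd_term (Nat.lt_succ_iff.mp (Finset.mem_range.mp ht)))
          (pmul d B C)).symm
    _ = pmul d A (pmul d B C) := by rw [← decomp hA]

end Assoc

section ApplyLemmas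

theorem sum_term_apply_nat (f : ℕ → R) (N : ℕ) (l0 : ℕ) (h : l0 < N) :
    (∑ l ∈ range N, term (f l) (l:ℤ)) ((l0:ℕ):ℤ) = f l0 := by
  rw [Finset.sum_apply]
  rw [Finset.sum_eq_single_of_mem l0 (Finset.mem_range.mpr h)]
  · simp [term]
  · intro b _ hb
    unfold term
    rw [if_neg (by exact_mod_cast fun h2 => hb (by exact_mod_cast h2.symm))]

theorem sum_term_apply_none (f : ℕ → R) (N : ℕ) (m : ℤ) (h : ∀ l : ℕ, l < N → m ≠ (l:ℤ)) :
    (∑ l ∈ range N, term (f l) (l:ℤ)) m = 0 := by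
  rw [Finset.sum_apply]
  refine Finset.sum_eq_zero fun l hl => ?_
  rw [Finset.mem_range] at hl
  unfold term
  rw [if_neg (h l hl)]

end ApplyLemmas

end GDAux
end Infra

open GDAux Finset in
open GD in
/-- Lemma 4.1: with `L = ∂^{n+1} - ∑_{j<n} u_j ∂^j` and the
coefficients `V^j_l` defined by the recursion (5.9)/(extev) from the first row,
and `E = -∑_{j≤n} V^0_j ∂^j`, one has, for every `j = 0, …, n+1`,
`∂^j E = -∑_{l≤n} V^j_l ∂^l + (∂^j E L^{-1})₊ (L - λ)`. -/
theorem gd_lemma41 {R : Type} [CommRing R] (d : R → R) (hd : GD.IsDeriv d)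
    (n : ℕ) (hn : 0 < n) (lam : R) (hlam : d lam = 0)
    (u : ℕ → R) (hun : u n = 0)
    (V : ℕ → ℕ → R)
    (hrec0 : ∀ k ≤ n, V (k + 1) 0 = d (V k 0) + V k n * (u 0 + lam))
    (hrecl : ∀ k ≤ n, ∀ l, 1 ≤ l → l ≤ n →
      V (k + 1) l = d (V k l) + V k (l - 1) + u l * V k n)
    (L : PDO R)
    (hL : L = term 1 ((n : ℤ) + 1) - ∑ j ∈ Finset.range n, term (u j) (j : ℤ))
    (Linv : PDO R)
    (hinv1 : pmul d L Linv = GD.one) (hinv2 : pmul d Linv L = GD.one)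
    (hord : ∀ i : ℤ, -((n : ℤ) + 1) < i → Linv i = 0)
    (E : PDO R)
    (hE : E = - ∑ j ∈ Finset.range (n + 1), term (V 0 j) (j : ℤ)) :
    ∀ j ≤ n + 1,
      pmul d (term 1 (j : ℤ)) E =
        - (∑ l ∈ Finset.range (n + 1), term (V j l) (l : ℤ)) +
          pmul d (GD.plus (pmul d (pmul d (term 1 (j : ℤ)) E) Linv))
            (L - term lam 0) := by
  classical
  have hBddE : Bdd n E := by
    rw [hE]
    exact bdd_neg (bdd_sum fun l hl => bdd_term (Nat.lt_succ_iff.mp (Finset.mem_range.mp hl)))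
  have hBddL : Bdd (n+1) L := by
    rw [hL]
    refine bdd_sub (bdd_term_int (by positivity) (by push_cast; omega)) ?_
    exact bdd_sum fun l hl => bdd_term (by have := Finset.mem_range.mp hl; omega)
  have hBddLt : Bdd (n+1) (L - term lam 0) :=
    bdd_sub hBddL (bdd_term_int le_rfl (by positivity))
  have hBddW : ∀ j : ℕ, Bdd n (-(∑ l ∈ Finset.range (n+1), term (V j l) (l:ℤ))) := fun j =>
    bdd_neg (bdd_sum fun l hl => bdd_term (Nat.lt_succ_iff.mp (Finset.mem_range.mp hl)))
  have hBddM : ∀ j : ℕ, Bdd (j + n) (pmul d (term (1:R) (j:ℤ)) E) := fun j =>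
    bdd_pmul hd (bdd_term (le_refl j)) hBddE
  have hLinv : ∀ i : ℤ, -(n:ℤ) - 1 < i → Linv i = 0 := fun i hi => hord i (by omega)
  have hYvan : ∀ (j : ℕ) (i : ℤ), (j:ℤ) - 1 < i →
      pmul d (pmul d (term (1:R) (j:ℤ)) E) Linv i = 0 := fun j i hi =>
    pmul_upper_vanish hd (hBddM j) (t := (j:ℤ)+(n:ℤ)) (b := -(n:ℤ)-1)
      (fun x hx => (hBddM j).zero_of_gt (by push_cast; omega)) hLinv (by omega)
  have hPvan : ∀ (j : ℕ) (i : ℤ), (j:ℤ) - 1 < i →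
      GD.plus (pmul d (pmul d (term (1:R) (j:ℤ)) E) Linv) i = 0 := by
    intro j i hi
    show (if 0 ≤ i then pmul d (pmul d (term (1:R) (j:ℤ)) E) Linv i else 0) = 0
    split_ifs with h
    · exact hYvan j i hi
    · rfl
  have hBddP : ∀ j : ℕ, j ≤ n + 1 →
      Bdd n (GD.plus (pmul d (pmul d (term (1:R) (j:ℤ)) E) Linv)) := by
    intro j hj i hi
    have h0 : 0 ≤ i := by
      by_contra h
      exact hi (by
        show (if 0 ≤ i then pmul d (pmul d (term (1:R) (j:ℤ)) E) Linv i else 0) = 0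
        rw [if_neg h])
    refine ⟨h0, ?_⟩
    by_contra hgt
    push_neg at hgt
    exact hi (hPvan j i (by omega))
  have hL1 : L ((n+1:ℕ):ℤ) = 1 := by
    rw [hL]
    show term (1:R) ((n:ℤ)+1) ((n+1:ℕ):ℤ)
      - (∑ l ∈ Finset.range n, term (u l) (l:ℤ)) ((n+1:ℕ):ℤ) = 1
    rw [sum_term_apply_none _ _ _ (fun l hl => by push_cast; omega), sub_zero]
    show (if ((n+1:ℕ):ℤ) = (n:ℤ)+1 then (1:R) else 0) = 1
    rw [if_pos (by push_cast; ring)]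
  have hLinvTop : Linv (-((n:ℤ)+1)) = 1 := by
    have h := pmul_top hd hBddL (c := (n:ℤ)+1) (fun i hi => hord i hi)
    rw [show ((n+1:ℕ):ℤ) - ((n:ℤ)+1) = 0 by push_cast; ring, hinv1, hL1, one_mul] at h
    have hone0 : GD.one (0:ℤ) = (1:R) := by
      show (if (0:ℤ) = 0 then (1:R) else 0) = 1
      rw [if_pos rfl]
    rw [hone0] at h
    exact h.symm
  intro j
  induction j with
  | zero =>
    intro _
    rw [Nat.cast_zero]
    have e1 : term (1:R) (0:ℤ) = GD.one := rfl
    rw [e1, pmul_one_left hd E]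
    have hP0 : GD.plus (pmul d E Linv) = 0 := by
      funext i
      show (if 0 ≤ i then pmul d E Linv i else 0) = 0
      split_ifs with h
      · exact pmul_upper_vanish hd hBddE (t := (n:ℤ)) (b := -(n:ℤ)-1)
          (fun x hx => hBddE.zero_of_gt hx) hLinv (by omega)
      · rfl
    rw [hP0, pmul_zero_left, add_zero]
    exact hE
  | succ j ih =>
    intro hj1
    have hjn : j ≤ n := by omega
    have Gj := ih (by omega)
    have hstep : term (1:R) ((j+1:ℕ):ℤ) = Dop d (term (1:R) (j:ℤ)) := by
      rw [Dop_term hd, show ((j+1:ℕ):ℤ) = (j:ℤ)+1 by push_cast; ring]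
    have hM1 : pmul d (term (1:R) ((j+1:ℕ):ℤ)) E = Dop d (pmul d (term (1:R) (j:ℤ)) E) := by
      rw [hstep, leib hd (bdd_term (le_refl j)) E]
    have hY1 : pmul d (pmul d (term (1:R) ((j+1:ℕ):ℤ)) E) Linv
        = Dop d (pmul d (pmul d (term (1:R) (j:ℤ)) E) Linv) := by
      rw [hM1, leib hd (hBddM j) Linv]
    set c : R := pmul d (pmul d (term (1:R) (j:ℤ)) E) Linv (-1) with hcdef
    have hP1 : GD.plus (pmul d (pmul d (term (1:R) ((j+1:ℕ):ℤ)) E) Linv)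
        = Dop d (GD.plus (pmul d (pmul d (term (1:R) (j:ℤ)) E) Linv)) + term c 0 := by
      rw [hY1]
      funext i
      show (if 0 ≤ i then d (pmul d (pmul d (term (1:R) (j:ℤ)) E) Linv i)
            + pmul d (pmul d (term (1:R) (j:ℤ)) E) Linv (i-1) else 0)
        = (d (if 0 ≤ i then pmul d (pmul d (term (1:R) (j:ℤ)) E) Linv i else 0)
            + (if 0 ≤ i - 1 then pmul d (pmul d (term (1:R) (j:ℤ)) E) Linv (i-1) else 0))
          + (if i = 0 then c else 0)
      rcases lt_trichotomy i 0 with h | h | h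
      · rw [if_neg (by omega), if_neg (by omega), if_neg (by omega), if_neg (by omega),
          d_zero hd]
        ring
      · subst h
        rw [if_pos le_rfl, if_pos le_rfl, if_neg (by omega), if_pos rfl,
          show (0:ℤ) - 1 = -1 by norm_num, hcdef]
        ring
      · rw [if_pos (by omega), if_pos (by omega), if_pos (by omega), if_neg (by omega)]
        ring
    have hWLinv : pmul d (-(∑ l ∈ Finset.range (n+1), term (V j l) (l:ℤ))) Linv (-1)
        = - V j n := by
      have h := pmul_top hd (hBddW j) (c := (n:ℤ)+1) (fun i hi => hord i hi)
      rw [show ((n:ℕ):ℤ) - ((n:ℤ)+1) = -1 by push_cast; ring] at h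
      have hWn : (-(∑ l ∈ Finset.range (n+1), term (V j l) (l:ℤ))) ((n:ℕ):ℤ) = - V j n := by
        show -((∑ l ∈ Finset.range (n+1), term (V j l) (l:ℤ)) ((n:ℕ):ℤ)) = _
        rw [sum_term_apply_nat _ _ n (Nat.lt_succ_self n)]
      rw [h, hWn, hLinvTop, mul_one]
    have hQLinv : pmul d (pmul d
        (GD.plus (pmul d (pmul d (term (1:R) (j:ℤ)) E) Linv)) (L - term lam 0)) Linv (-1)
        = 0 := by
      rw [assoc hd (hBddP j (by omega)) hBddLt Linv]
      have hLtLinv : pmul d (L - term lam 0) Linv = GD.one - fun m => lam * Linv m := by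
        rw [pmul_sub_left hBddL (bdd_term_int le_rfl (by positivity)) Linv, hinv1,
          pmul_termc_left hd lam Linv]
      rw [hLtLinv, pmul_sub_right hd (hBddP j (by omega)) GD.one (fun m => lam * Linv m),
        pmul_one_right hd (hBddP j (by omega)),
        pmul_smul_right hd (hBddP j (by omega)) hlam Linv]
      have h1 : GD.plus (pmul d (pmul d (term (1:R) (j:ℤ)) E) Linv) (-1) = 0 := by
        show (if (0:ℤ) ≤ -1 then pmul d (pmul d (term (1:R) (j:ℤ)) E) Linv (-1) else 0) = 0
        rw [if_neg (by norm_num)]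
      have h2 : pmul d (GD.plus (pmul d (pmul d (term (1:R) (j:ℤ)) E) Linv)) Linv (-1) = 0 :=
        pmul_upper_vanish hd (hBddP j (by omega)) (t := (j:ℤ)-1) (b := -(n:ℤ)-1)
          (fun i hi => hPvan j i hi) hLinv (by omega)
      simp only [Pi.sub_apply]
      rw [h1, h2, mul_zero, sub_zero]
    have hc : c = - V j n := by
      have hsplit := pmul_add_left (d := d)
        ((hBddW j).mono (show n ≤ 2*n+1 by omega))
        ((bdd_pmul hd (hBddP j (by omega)) hBddLt).mono (show n+(n+1) ≤ 2*n+1 by omega)) Linv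
      rw [hcdef, Gj, hsplit]
      simp only [Pi.add_apply]
      rw [hWLinv, hQLinv, add_zero]
    -- the recursion, pointwise
    have hWrec : ∀ m : ℤ, d ((-(∑ l ∈ Finset.range (n+1), term (V j l) (l:ℤ))) m)
        + (-(∑ l ∈ Finset.range (n+1), term (V j l) (l:ℤ))) (m-1)
        = (-(∑ l ∈ Finset.range (n+1), term (V (j+1) l) (l:ℤ))) m
          + c * ((L - term lam 0) m) := by
      intro m
      rw [hc, hL]
      simp only [Pi.neg_apply, Pi.sub_apply]
      rw [d_neg hd]
      have hterm1 : term (1:R) ((n:ℤ)+1) m = (if m = (n:ℤ)+1 then (1:R) else 0) := rfl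
      have htermlam : term lam (0:ℤ) m = (if m = 0 then lam else 0) := rfl
      by_cases hm0 : m < 0
      · rw [sum_term_apply_none (V j) _ m (fun l hl => by omega),
          sum_term_apply_none (V j) _ (m-1) (fun l hl => by omega),
          sum_term_apply_none (V (j+1)) _ m (fun l hl => by omega),
          sum_term_apply_none u _ m (fun l hl => by omega),
          hterm1, htermlam, if_neg (by omega), if_neg (by omega), d_zero hd]
        ring
      push_neg at hm0
      obtain ⟨q, rfl⟩ : ∃ q : ℕ, m = (q:ℤ) := ⟨m.toNat, (Int.toNat_of_nonneg hm0).symm⟩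
      rcases Nat.lt_or_ge q 1 with hq | hq
      · have hq0 : q = 0 := by omega
        subst hq0
        rw [sum_term_apply_nat (V j) _ 0 (by omega),
          sum_term_apply_none (V j) _ _ (fun l hl => by omega),
          sum_term_apply_nat (V (j+1)) _ 0 (by omega),
          sum_term_apply_nat u _ 0 (by omega),
          hterm1, htermlam, if_neg (by omega), if_pos (by norm_num)]
        rw [hrec0 j hjn]
        ring
      rcases Nat.lt_or_ge q (n+1) with hq2 | hq2
      · -- 1 ≤ q ≤ n
        rw [sum_term_apply_nat (V j) _ q (by omega),
          show ((q:ℕ):ℤ) - 1 = (((q-1:ℕ)):ℤ) by push_cast; omega,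
          sum_term_apply_nat (V j) _ (q-1) (by omega),
          sum_term_apply_nat (V (j+1)) _ q (by omega),
          hterm1, htermlam, if_neg (by omega), if_neg (by omega)]
        rcases Nat.lt_or_ge q n with hq3 | hq3
        · rw [sum_term_apply_nat u _ q (by omega), hrecl j hjn q (by omega) (by omega)]
          ring
        · rw [sum_term_apply_none u _ _ (fun l hl => by omega),
            hrecl j hjn q (by omega) (by omega),
            show u q = 0 by rw [show q = n by omega]; exact hun]
          ring
      rcases Nat.lt_or_ge q (n+2) with hq4 | hq4
      · have hq5 : q = n+1 := by omega
        subst hq5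
        rw [sum_term_apply_none (V j) _ _ (fun l hl => by omega),
          show ((n+1:ℕ):ℤ) - 1 = ((n:ℕ):ℤ) by push_cast; omega,
          sum_term_apply_nat (V j) _ n (by omega),
          sum_term_apply_none (V (j+1)) _ _ (fun l hl => by omega),
          sum_term_apply_none u _ _ (fun l hl => by omega),
          hterm1, htermlam, if_pos (by push_cast; ring), if_neg (by omega), d_zero hd]
        ring
      · rw [sum_term_apply_none (V j) _ ((q:ℕ):ℤ) (fun l hl => by omega),
          sum_term_apply_none (V j) _ (((q:ℕ):ℤ) - 1) (fun l hl => by omega),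
          sum_term_apply_none (V (j+1)) _ _ (fun l hl => by omega),
          sum_term_apply_none u _ _ (fun l hl => by omega),
          hterm1, htermlam, if_neg (by omega), if_neg (by omega), d_zero hd]
        ring
    -- final assembly
    rw [hP1]
    have hDopP : Bdd (n+1) (Dop d (GD.plus (pmul d (pmul d (term (1:R) (j:ℤ)) E) Linv))) :=
      bdd_Dop hd (hBddP j (by omega))
    rw [pmul_add_left hDopP (bdd_term_int le_rfl (by positivity)) (L - term lam 0),
      leib hd (hBddP j (by omega)) (L - term lam 0),
      pmul_termc_left hd c (L - term lam 0), hM1]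
    conv_lhs => rw [Gj, Dop_add _ _ hd]
    funext m
    simp only [Pi.add_apply, Dop]
    linear_combination hWrec m
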